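/- arXiv:1411.3113 — 2 statements merged into one kernel-verified Lean document; each statement's English description precedes it below -/
import Mathlib

section
/- For all u, w ∈ ℝ^J one has the cancellation ⟨B(u, Qw), Qw⟩ = 0. -/
open scoped RealInnerProductSpace

noncomputable section

/-- The Lorenz '96 bilinear map `B` on `ℝ^J`, with cyclic indexing via `ZMod J`:
`B(u,w)^(j) = -(1/2)[w^(j-1)u^(j+1) + u^(j-1)w^(j+1) - w^(j-2)u^(j-1) - u^(j-2)w^(j-1)]`. -/
def L96B {J : ℕ} [NeZero J] (u w : EuclideanSpace ℝ (ZMod J)) :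
    EuclideanSpace ℝ (ZMod J) :=
  WithLp.toLp 2 (fun j => -(1/2 : ℝ) * (w (j - 1) * u (j + 1) + u (j - 1) * w (j + 1)
    - w (j - 2) * u (j - 1) - u (j - 2) * w (j - 1)))

/-- The constant forcing vector `f = (F, ..., F)`. -/
def L96f {J : ℕ} [NeZero J] (F : ℝ) : EuclideanSpace ℝ (ZMod J) := WithLp.toLp 2 (fun _ => F)

/-- `u` solves the Lorenz '96 equation `u' = -u - B(u,u) + f` on the set `I`. -/
def L96Sol {J : ℕ} [NeZero J] (F : ℝ) (I : Set ℝ)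
    (u : ℝ → EuclideanSpace ℝ (ZMod J)) : Prop :=
  ∀ t ∈ I, HasDerivAt u (-u t - L96B (u t) (u t) + L96f F) t

/-- The projection `P` setting to zero every third coordinate
(those with 1-based index `≡ 0 mod 3`, i.e. `ZMod J`-index with value `≡ 0 mod 3`
when `3 ∣ J`). -/
def L96P {J : ℕ} [NeZero J] (u : EuclideanSpace ℝ (ZMod J)) :
    EuclideanSpace ℝ (ZMod J) :=
  WithLp.toLp 2 (fun (j : ZMod J) => if j.val % 3 = 0 then 0 else u j)

/-- The complementary projection `Q = I - P`. -/
def L96Q {J : ℕ} [NeZero J] (u : EuclideanSpace ℝ (ZMod J)) :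
    EuclideanSpace ℝ (ZMod J) :=
  u - L96P u

/-- the cancellation `⟨B(u, Qw), Qw⟩ = 0`. -/
theorem l96_BQ_cancellation {J J' : ℕ} [NeZero J] (hJ' : 1 ≤ J') (hJ : J = 3 * J')
    (u w : EuclideanSpace ℝ (ZMod J)) :
    ⟪L96B u (L96Q w), L96Q w⟫ = 0 := by
  have h3 : (3 : ℕ) ∣ J := ⟨J', hJ⟩
  set φ := ZMod.castHom h3 (ZMod 3) with hφdef
  have hQ0 : ∀ j : ZMod J, φ j ≠ 0 → L96Q w j = 0 := by
    intro j hj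
    have hv : j.val % 3 ≠ 0 := by
      intro h
      apply hj
      have : φ j = ((j.val : ℕ) : ZMod 3) := by
        simp [hφdef, ZMod.castHom_apply, ZMod.natCast_val]
      rw [this, ZMod.natCast_eq_zero_iff]
      exact Nat.dvd_of_mod_eq_zero h
    simp [L96Q, L96P, hv]
  rw [PiLp.inner_apply]
  apply Finset.sum_eq_zero
  intro j _
  by_cases h : φ j = 0
  · have h1 : L96Q w (j - 1) = 0 := by
      apply hQ0; rw [map_sub, map_one, h]; decide
    have h2 : L96Q w (j + 1) = 0 := by
      apply hQ0; rw [map_add, map_one, h]; decide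
    have h4 : L96Q w (j - 2) = 0 := by
      apply hQ0
      rw [map_sub, h]
      have : φ (2 : ZMod J) = 2 := map_ofNat φ 2
      rw [this]; decide
    simp [L96B, h1, h2, h4]
  · simp [hQ0 j h]
end
end

section
/- For all v, δ ∈ ℝ^J one has |⟨B(v,δ), δ⟩| ≤ |v|·|δ|². -/
open scoped RealInnerProductSpace

noncomputable section

lemma l96_shift_sum {J : ℕ} [NeZero J] (F : ZMod J → ℝ) (c : ZMod J) :
    ∑ j : ZMod J, F (j + c) = ∑ j : ZMod J, F j :=
  Fintype.sum_equiv (Equiv.addRight c) _ _ (fun _ => rfl)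

lemma l96_aux_bound {J : ℕ} [NeZero J] (v δ : EuclideanSpace ℝ (ZMod J)) (c d : ZMod J) :
    |∑ j : ZMod J, v j * (δ (j + c) * δ (j + d))| ≤ ‖v‖ * ‖δ‖ ^ 2 := by
  set w : EuclideanSpace ℝ (ZMod J) := WithLp.toLp 2 (fun j => δ (j + c) * δ (j + d)) with hw
  have hsum : ∑ j : ZMod J, v j * (δ (j + c) * δ (j + d)) = ⟪v, w⟫ := by
    simp [PiLp.inner_apply, RCLike.inner_apply, hw]
    exact Finset.sum_congr rfl (fun j _ => mul_comm _ _)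
  have hδsq : ‖δ‖ ^ 2 = ∑ j : ZMod J, δ j ^ 2 := by
    rw [PiLp.norm_sq_eq_of_L2]
    simp [Real.norm_eq_abs, sq_abs]
  have hwnorm : ‖w‖ ≤ ‖δ‖ ^ 2 := by
    have hw2 : ‖w‖ ^ 2 ≤ (‖δ‖ ^ 2) ^ 2 := by
      rw [PiLp.norm_sq_eq_of_L2]
      have h1 : ∀ j : ZMod J, ‖w j‖ ^ 2 ≤ δ (j + c) ^ 2 * ‖δ‖ ^ 2 := by
        intro j
        have hd : δ (j + d) ^ 2 ≤ ‖δ‖ ^ 2 := by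
          rw [hδsq]
          exact Finset.single_le_sum (f := fun k => δ k ^ 2)
            (fun k _ => sq_nonneg _) (Finset.mem_univ _)
        calc ‖w j‖ ^ 2 = δ (j + c) ^ 2 * δ (j + d) ^ 2 := by
              rw [hw]; simp [Real.norm_eq_abs, abs_mul, mul_pow, sq_abs]
          _ ≤ δ (j + c) ^ 2 * ‖δ‖ ^ 2 := mul_le_mul_of_nonneg_left hd (sq_nonneg _)
      calc ∑ j : ZMod J, ‖w j‖ ^ 2 ≤ ∑ j : ZMod J, δ (j + c) ^ 2 * ‖δ‖ ^ 2 :=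
            Finset.sum_le_sum (fun j _ => h1 j)
        _ = (∑ j : ZMod J, δ (j + c) ^ 2) * ‖δ‖ ^ 2 := by rw [← Finset.sum_mul]
        _ = (∑ j : ZMod J, δ j ^ 2) * ‖δ‖ ^ 2 := by
            rw [l96_shift_sum (fun k => δ k ^ 2) c]
        _ = (‖δ‖ ^ 2) ^ 2 := by rw [← hδsq]; ring
    have := Real.sqrt_le_sqrt hw2
    rwa [Real.sqrt_sq (norm_nonneg _), Real.sqrt_sq (sq_nonneg _)] at this
  calc |∑ j : ZMod J, v j * (δ (j + c) * δ (j + d))| = |⟪v, w⟫| := by rw [hsum]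
    _ ≤ ‖v‖ * ‖w‖ := abs_real_inner_le_norm v w
    _ ≤ ‖v‖ * ‖δ‖ ^ 2 := mul_le_mul_of_nonneg_left hwnorm (norm_nonneg _)

/-- `|⟨B(v,δ), δ⟩| ≤ |v||δ|²`. -/
theorem l96_Bvdelta_bound {J : ℕ} [NeZero J] (hJ : 3 ≤ J)
    (v δ : EuclideanSpace ℝ (ZMod J)) :
    |⟪L96B v δ, δ⟫| ≤ ‖v‖ * ‖δ‖ ^ 2 := by
  have hinner : ⟪L96B v δ, δ⟫ = ∑ j : ZMod J, L96B v δ j * δ j := by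
    simp [PiLp.inner_apply, RCLike.inner_apply]
    exact Finset.sum_congr rfl (fun j _ => mul_comm _ _)
  have h1 : ∑ j : ZMod J, δ (j-1) * v (j+1) * δ j
      = ∑ j : ZMod J, v j * (δ (j + (-2)) * δ (j + (-1))) := by
    rw [← l96_shift_sum (fun k => v k * (δ (k + (-2)) * δ (k + (-1)))) 1]
    refine Finset.sum_congr rfl (fun j _ => ?_)
    rw [show j + 1 + (-2) = j - 1 by ring, show j + 1 + (-1) = j by ring]; ring
  have h2 : ∑ j : ZMod J, v (j-1) * δ (j+1) * δ j
      = ∑ j : ZMod J, v j * (δ (j + 1) * δ (j + 2)) := by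
    rw [← l96_shift_sum (fun k => v k * (δ (k + 1) * δ (k + 2))) (-1)]
    refine Finset.sum_congr rfl (fun j _ => ?_)
    rw [show j + (-1) = j - 1 by ring, show j - 1 + 1 = j by ring,
      show j - 1 + 2 = j + 1 by ring]; ring
  have h3 : ∑ j : ZMod J, δ (j-2) * v (j-1) * δ j
      = ∑ j : ZMod J, v j * (δ (j + (-1)) * δ (j + 1)) := by
    rw [← l96_shift_sum (fun k => v k * (δ (k + (-1)) * δ (k + 1))) (-1)]
    refine Finset.sum_congr rfl (fun j _ => ?_)
    rw [show j + (-1) = j - 1 by ring, show j - 1 + (-1) = j - 2 by ring,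
      show j - 1 + 1 = j by ring]; ring
  have h4 : ∑ j : ZMod J, v (j-2) * δ (j-1) * δ j
      = ∑ j : ZMod J, v j * (δ (j + 1) * δ (j + 2)) := by
    rw [← l96_shift_sum (fun k => v k * (δ (k + 1) * δ (k + 2))) (-2)]
    refine Finset.sum_congr rfl (fun j _ => ?_)
    rw [show j + (-2) = j - 2 by ring, show j - 2 + 1 = j - 1 by ring,
      show j - 2 + 2 = j by ring]; ring
  have hT : ∑ j : ZMod J, L96B v δ j * δ j
      = -(1/2 : ℝ) * ((∑ j : ZMod J, δ (j-1) * v (j+1) * δ j)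
          + (∑ j : ZMod J, v (j-1) * δ (j+1) * δ j)
          - (∑ j : ZMod J, δ (j-2) * v (j-1) * δ j)
          - (∑ j : ZMod J, v (j-2) * δ (j-1) * δ j)) := by
    calc ∑ j : ZMod J, L96B v δ j * δ j
        = ∑ j : ZMod J, (-(1/2 : ℝ)) * (δ (j-1) * v (j+1) * δ j
            + v (j-1) * δ (j+1) * δ j - δ (j-2) * v (j-1) * δ j
            - v (j-2) * δ (j-1) * δ j) :=
          Finset.sum_congr rfl (fun j _ => by simp only [L96B, PiLp.toLp_apply]; ring)
      _ = -(1/2 : ℝ) * ∑ j : ZMod J, (δ (j-1) * v (j+1) * δ j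
            + v (j-1) * δ (j+1) * δ j - δ (j-2) * v (j-1) * δ j
            - v (j-2) * δ (j-1) * δ j) := (Finset.mul_sum _ _ _).symm
      _ = _ := by
          rw [Finset.sum_sub_distrib, Finset.sum_sub_distrib, Finset.sum_add_distrib]
  have hexp : ⟪L96B v δ, δ⟫
      = (1/2 : ℝ) * ((∑ j : ZMod J, v j * (δ (j + (-1)) * δ (j + 1)))
        - ∑ j : ZMod J, v j * (δ (j + (-2)) * δ (j + (-1)))) := by
    rw [hinner, hT, h1, h2, h3, h4]; ring
  rw [hexp]
  have b1 := l96_aux_bound v δ (-1) 1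
  have b2 := l96_aux_bound v δ (-2) (-1)
  calc |(1/2 : ℝ) * ((∑ j : ZMod J, v j * (δ (j + (-1)) * δ (j + 1)))
        - ∑ j : ZMod J, v j * (δ (j + (-2)) * δ (j + (-1))))|
      ≤ (1/2) * (|∑ j : ZMod J, v j * (δ (j + (-1)) * δ (j + 1))|
        + |∑ j : ZMod J, v j * (δ (j + (-2)) * δ (j + (-1)))|) := by
        rw [abs_mul, abs_of_nonneg (by norm_num : (0:ℝ) ≤ 1/2)]
        exact mul_le_mul_of_nonneg_left (abs_sub _ _) (by norm_num)
    _ ≤ (1/2) * (‖v‖ * ‖δ‖ ^ 2 + ‖v‖ * ‖δ‖ ^ 2) :=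
        mul_le_mul_of_nonneg_left (add_le_add b1 b2) (by norm_num)
    _ = ‖v‖ * ‖δ‖ ^ 2 := by ring
end
end
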